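/- Let a < b be real numbers and λ ∈ [1/2, 1). Define f, g : [a,b] → [a,b] by f(x) = a + λ(x − a) and g(x) = b − λ(b − x). Then [a,b] is the unique minimal set of IFS(f,g): for every x ∈ [a,b], the closure of the orbit O(x) equals [a,b]. -/

import Mathlib

open Set Topology Filter

/-- The circle. -/
abbrev S1 := AddCircle (1 : ℝ)

/-- Apply a word `l = [i₁, …, i_k]` of generators: `f i₁ ∘ ⋯ ∘ f i_k`. -/
def applyWord {X : Type*} {n : ℕ} (f : Fin n → X → X) (l : List (Fin n)) (x : X) : X :=
  l.foldr (fun i y => f i y) x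

/-- The orbit of `x` under the semigroup `IFS(f₁,…,fₙ)` (nonempty words). -/
def orbitIFS {X : Type*} {n : ℕ} (f : Fin n → X → X) (x : X) : Set X :=
  {y | ∃ l : List (Fin n), l ≠ [] ∧ y = applyWord f l x}

/-- `M` is a minimal set for the IFS generated by `f₁,…,fₙ`. -/
def IsMinimalIFS {X : Type*} [TopologicalSpace X] {n : ℕ} (f : Fin n → X → X)
    (M : Set X) : Prop :=
  M.Nonempty ∧ IsClosed M ∧ (∀ i, f i '' M ⊆ M) ∧
    ∀ x ∈ M, closure (orbitIFS f x) = M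

/-- A Cantor set: nonempty, compact, perfect and totally disconnected. -/
def IsCantorSet {X : Type*} [TopologicalSpace X] (K : Set X) : Prop :=
  K.Nonempty ∧ IsCompact K ∧ Perfect K ∧ IsTotallyDisconnected K

/-- `X` is (homeomorphic to) the circle or a (nondegenerate) closed interval. -/
def IsCircleOrInterval (X : Type*) [TopologicalSpace X] : Prop :=
  Nonempty (X ≃ₜ S1) ∨ ∃ a b : ℝ, a < b ∧ Nonempty (X ≃ₜ Set.Icc a b)

/-- The canonical decomposition `M = 𝓘 ∪ K ∪ N` of a closed set:
`𝓘` is the interior (union of components of the interior), `K` is the maximal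
Cantor set contained in `M \ 𝓘` (possibly empty), and `N` is the countable remainder. -/
def IsCanonicalDecomp {X : Type*} [TopologicalSpace X] (M I K N : Set X) : Prop :=
  I = interior M ∧
  (IsCantorSet K ∨ K = ∅) ∧
  K ⊆ M \ I ∧
  (∀ K₁ : Set X, IsCantorSet K₁ → K ⊆ K₁ → K₁ ⊆ M \ I → K₁ = K) ∧
  N = M \ (I ∪ K) ∧
  N.Countable

/-- A symmetric Cantorval: a nonempty compact set which is the closure of its interior,
and such that both endpoints of every nontrivial connected component are accumulation
points of one-point connected components. -/
def IsSymmetricCantorval {X : Type*} [TopologicalSpace X] (M : Set X) : Prop :=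
  M.Nonempty ∧ IsCompact M ∧ M = closure (interior M) ∧
  ∀ x ∈ M, ¬ (connectedComponentIn M x).Subsingleton →
    ∀ z ∈ frontier (connectedComponentIn M x),
      AccPt z (𝓟 {y | y ∈ M ∧ connectedComponentIn M y = {y}})


theorem stmt16 (a b lam : ℝ) (hab : a < b) (hlam : 1 / 2 ≤ lam) (hlam1 : lam < 1)
    (f g : ℝ → ℝ) (hf : ∀ x, f x = a + lam * (x - a)) (hg : ∀ x, g x = b - lam * (b - x)) :
    ∀ x ∈ Set.Icc a b, closure (orbitIFS ![f, g] x) = Set.Icc a b := by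
  intro x hx
  have hlam0 : (0:ℝ) < lam := lt_of_lt_of_le (by norm_num) hlam
  have hstep : ∀ (i : Fin 2), ∀ y ∈ Set.Icc a b, ![f, g] i y ∈ Set.Icc a b := by
    intro i y hy
    fin_cases i
    · show f y ∈ Set.Icc a b
      rw [hf]
      constructor
      · nlinarith [hy.1]
      · nlinarith [hy.2]
    · show g y ∈ Set.Icc a b
      rw [hg]
      constructor
      · nlinarith [hy.1]
      · nlinarith [hy.2]
  have hmem : ∀ (l : List (Fin 2)), ∀ y ∈ Set.Icc a b,
      applyWord ![f, g] l y ∈ Set.Icc a b := by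
    intro l
    induction l with
    | nil => intro y hy; simpa [applyWord] using hy
    | cons i l ih =>
      intro y hy
      have h1 := ih y hy
      simpa [applyWord] using hstep i _ h1
  have hdiff : ∀ (l : List (Fin 2)) (u v : ℝ),
      applyWord ![f, g] l u - applyWord ![f, g] l v = lam ^ l.length * (u - v) := by
    intro l
    induction l with
    | nil => intro u v; simp [applyWord]
    | cons i l ih =>
      intro u v
      have h1 := ih u v
      fin_cases i
      · show f (applyWord ![f, g] l u) - f (applyWord ![f, g] l v) = _
        rw [hf, hf, List.length_cons, pow_succ]
        linear_combination lam * h1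
      · show g (applyWord ![f, g] l u) - g (applyWord ![f, g] l v) = _
        rw [hg, hg, List.length_cons, pow_succ]
        linear_combination lam * h1
  have hcover : ∀ (k : ℕ), ∀ y ∈ Set.Icc a b, ∃ l : List (Fin 2),
      l.length = k ∧ ∃ z ∈ Set.Icc a b, y = applyWord ![f, g] l z := by
    intro k
    induction k with
    | zero => intro y hy; exact ⟨[], rfl, y, hy, rfl⟩
    | succ k ih =>
      intro y hy
      by_cases hy2 : y ≤ a + lam * (b - a)
      · have h1 : 0 ≤ (y - a) / lam := div_nonneg (by linarith [hy.1]) hlam0.le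
        have h2 : (y - a) / lam ≤ b - a := by
          rw [div_le_iff₀ hlam0]; nlinarith
        have hz : a + (y - a) / lam ∈ Set.Icc a b := ⟨by linarith, by linarith⟩
        obtain ⟨l, hl, w, hw, hzw⟩ := ih _ hz
        refine ⟨0 :: l, by simp [hl], w, hw, ?_⟩
        show y = f (applyWord ![f, g] l w)
        rw [← hzw, hf]
        field_simp
        ring
      · push_neg at hy2
        have h1 : 0 ≤ (b - y) / lam := div_nonneg (by linarith [hy.2]) hlam0.le
        have h2 : (b - y) / lam ≤ b - a := by
          rw [div_le_iff₀ hlam0]; nlinarith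
        have hz : b - (b - y) / lam ∈ Set.Icc a b := ⟨by linarith, by linarith⟩
        obtain ⟨l, hl, w, hw, hzw⟩ := ih _ hz
        refine ⟨1 :: l, by simp [hl], w, hw, ?_⟩
        show y = g (applyWord ![f, g] l w)
        rw [← hzw, hg]
        field_simp
        ring
  apply subset_antisymm
  · apply closure_minimal _ isClosed_Icc
    rintro p ⟨l, _, rfl⟩
    exact hmem l x hx
  · intro y hy
    rw [Metric.mem_closure_iff]
    intro ε hε
    have hba : (0:ℝ) < b - a := by linarith
    obtain ⟨k, hk⟩ : ∃ k : ℕ, lam ^ k * (b - a) < ε := by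
      obtain ⟨k, hk⟩ := exists_pow_lt_of_lt_one (div_pos hε hba) hlam1
      exact ⟨k, by rw [← lt_div_iff₀ hba]; exact hk⟩
    obtain ⟨l, hl, z, hz, hyz⟩ := hcover (k + 1) y hy
    refine ⟨applyWord ![f, g] l x, ⟨l, by intro h; simp [h] at hl, rfl⟩, ?_⟩
    rw [Real.dist_eq, hyz, hdiff l z x, hl, abs_mul, abs_of_nonneg (pow_nonneg hlam0.le _)]
    have h1 : |z - x| ≤ b - a := by
      rw [abs_sub_le_iff]
      constructor <;> linarith [hx.1, hx.2, hz.1, hz.2]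
    calc lam ^ (k + 1) * |z - x| ≤ lam ^ (k + 1) * (b - a) :=
          mul_le_mul_of_nonneg_left h1 (pow_nonneg hlam0.le _)
      _ ≤ lam ^ k * (b - a) := by
          apply mul_le_mul_of_nonneg_right _ hba.le
          exact pow_le_pow_of_le_one hlam0.le hlam1.le (by omega)
      _ < ε := hk
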